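/- Let f̃ : ℝ^d → {0,1} be a measurable function, fix x ∈ ℝ^d, and set p = μ_x(f̃⁻¹{1}). Suppose 1/2 < p < 1. Then for every δ ∈ ℝ^d with ‖δ‖₂ < R, where R = (σ/2)·(Φ⁻¹(p) − Φ⁻¹(1−p)), one has μ_{x+δ}(f̃⁻¹{1}) > 1/2; in particular the smoothed binary classifier g̃, defined by g̃(y) = 1 if μ_y(f̃⁻¹{1}) > 1/2 and g̃(y) = 0 otherwise, satisfies g̃(x+δ) = 1. -/

import Mathlib

open MeasureTheory ProbabilityTheory
open scoped RealInnerProductSpace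
open Real
open scoped NNReal ENNReal

/-- `Phi` : cumulative distribution function of the standard real Gaussian N(0,1). -/
noncomputable def Phi : ℝ → ℝ := fun t => ((gaussianReal 0 1) (Set.Iic t)).toReal

/-- `PhiInv` : the standard Gaussian quantile function, inverse of `Phi` on (0,1). -/
noncomputable def PhiInv : ℝ → ℝ := Function.invFun Phi

/-- `gaussPi d σ x` : the isotropic Gaussian measure on ℝ^d with mean `x` and covariance σ²I,
i.e. the product measure whose i-th factor is the real Gaussian with mean `x i`, variance σ². -/
noncomputable def gaussPi (d : ℕ) (σ : ℝ) (x : EuclideanSpace ℝ (Fin d)) :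
    Measure (EuclideanSpace ℝ (Fin d)) :=
  (Measure.pi fun i => gaussianReal (x i) ⟨σ ^ 2, sq_nonneg σ⟩).map
    (MeasurableEquiv.toLp 2 (Fin d → ℝ))


lemma gauss_conv_pdf {v₁ v₂ : ℝ≥0} (h₁ : v₁ ≠ 0) (h₂ : v₂ ≠ 0) (m₁ m₂ b : ℝ) :
    ∫ a, gaussianPDFReal m₁ v₁ a * gaussianPDFReal m₂ v₂ (b - a) =
      gaussianPDFReal (m₁ + m₂) (v₁ + v₂) b := by
  have hV₁ : (0:ℝ) < (v₁:ℝ) := NNReal.coe_pos.mpr (pos_iff_ne_zero.mpr h₁)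
  have hV₂ : (0:ℝ) < (v₂:ℝ) := NNReal.coe_pos.mpr (pos_iff_ne_zero.mpr h₂)
  set V₁ : ℝ := (v₁:ℝ) with hV₁def
  set V₂ : ℝ := (v₂:ℝ) with hV₂def
  set w : ℝ := b - m₁ - m₂ with hw
  set B : ℝ := (V₁+V₂)/(2*V₁*V₂) with hBdef
  set c : ℝ := m₁ + V₁*w/(V₁+V₂) with hc
  have hB : 0 < B := by rw [hBdef]; positivity
  have hexp : ∀ a : ℝ, rexp (-(a-m₁)^2/(2*V₁)) * rexp (-(b-a-m₂)^2/(2*V₂))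
      = rexp (-w^2/(2*(V₁+V₂))) * rexp (-B*(a-c)^2) := by
    intro a
    rw [← Real.exp_add, ← Real.exp_add]
    congr 1
    rw [hBdef, hc, hw]
    have h12 : V₁ + V₂ > 0 := by positivity
    field_simp
    ring
  have hpt : ∀ a, gaussianPDFReal m₁ v₁ a * gaussianPDFReal m₂ v₂ (b - a)
      = ((Real.sqrt (2*π*V₁))⁻¹ * (Real.sqrt (2*π*V₂))⁻¹ * rexp (-w^2/(2*(V₁+V₂))))
        * rexp (-B*(a-c)^2) := by
    intro a
    rw [gaussianPDFReal, gaussianPDFReal, mul_mul_mul_comm, hexp a]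
    ring
  rw [integral_congr_ae (ae_of_all _ hpt), integral_const_mul,
    show (fun a : ℝ => rexp (-B*(a-c)^2)) = (fun a : ℝ => rexp (-B*a^2) : ℝ → ℝ) ∘ (fun a => a - c) from rfl]
  have hshift : ∫ a : ℝ, rexp (-B*(a-c)^2) = ∫ a : ℝ, rexp (-B*a^2) :=
    integral_sub_right_eq_self (fun a : ℝ => rexp (-B*a^2)) c
  rw [Function.comp_def, hshift, integral_gaussian]
  rw [gaussianPDFReal]
  have hcoe : ((v₁ + v₂ : ℝ≥0) : ℝ) = V₁ + V₂ := by push_cast; ring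
  rw [hcoe]
  have hwb : b - (m₁ + m₂) = w := by rw [hw]; ring
  rw [hwb]
  have hX : Real.sqrt (2*π*V₁) * Real.sqrt (2*π*V₂)
      = Real.sqrt (π/B) * Real.sqrt (2*π*(V₁+V₂)) := by
    rw [← Real.sqrt_mul (by positivity), ← Real.sqrt_mul (by positivity)]
    congr 1
    rw [hBdef]
    have h12 : V₁ + V₂ > 0 := by positivity
    field_simp
  have h1 : Real.sqrt (2*π*V₁) ≠ 0 := by positivity
  have h2 : Real.sqrt (2*π*V₂) ≠ 0 := by positivity
  have h3 : Real.sqrt (π/B) ≠ 0 := by positivity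
  have h4 : Real.sqrt (2*π*(V₁+V₂)) ≠ 0 := by positivity
  have hkey : (Real.sqrt (2*π*V₁))⁻¹ * (Real.sqrt (2*π*V₂))⁻¹ * Real.sqrt (π/B)
      = (Real.sqrt (2*π*(V₁+V₂)))⁻¹ := by
    rw [← mul_inv, hX, mul_inv, mul_comm ((Real.sqrt (π/B))⁻¹), mul_assoc,
      inv_mul_cancel₀ h3, mul_one]
  calc (Real.sqrt (2*π*V₁))⁻¹ * (Real.sqrt (2*π*V₂))⁻¹ * rexp (-w^2/(2*(V₁+V₂))) * Real.sqrt (π/B)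
      = ((Real.sqrt (2*π*V₁))⁻¹ * (Real.sqrt (2*π*V₂))⁻¹ * Real.sqrt (π/B))
        * rexp (-w^2/(2*(V₁+V₂))) := by ring
    _ = (Real.sqrt (2*π*(V₁+V₂)))⁻¹ * rexp (-w^2/(2*(V₁+V₂))) := by rw [hkey]
lemma gaussianPDFReal_le (m : ℝ) (v : ℝ≥0) (x : ℝ) :
    gaussianPDFReal m v x ≤ (Real.sqrt (2*π*v))⁻¹ := by
  rw [gaussianPDFReal]
  have h1 : rexp (-(x - m)^2 / (2*v)) ≤ 1 := by
    rw [Real.exp_le_one_iff]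
    rcases eq_or_ne (v : ℝ) 0 with h | h
    · simp [h]
    · have : (0:ℝ) < v := lt_of_le_of_ne v.2 (Ne.symm h)
      have := sq_nonneg (x - m)
      rw [div_nonpos_iff]
      right; constructor <;> nlinarith
  have h2 : (0:ℝ) ≤ (Real.sqrt (2*π*v))⁻¹ := by positivity
  calc (Real.sqrt (2*π*v))⁻¹ * rexp (-(x - m)^2 / (2*v))
      ≤ (Real.sqrt (2*π*v))⁻¹ * 1 := by exact mul_le_mul_of_nonneg_left h1 h2
    _ = _ := mul_one _

lemma gauss_conv (m₁ m₂ : ℝ) (v₁ v₂ : ℝ≥0) :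
    Measure.map (fun p : ℝ × ℝ => p.1 + p.2)
      ((gaussianReal m₁ v₁).prod (gaussianReal m₂ v₂)) = gaussianReal (m₁ + m₂) (v₁ + v₂) := by
  rcases eq_or_ne v₁ 0 with h₁ | h₁
  · subst h₁
    rw [gaussianReal_zero_var, Measure.dirac_prod, Measure.map_map measurable_add
      measurable_prodMk_left, zero_add]
    show Measure.map (fun b => m₁ + b) (gaussianReal m₂ v₂) = _
    rw [gaussianReal_map_const_add m₁, add_comm m₂ m₁]
  rcases eq_or_ne v₂ 0 with h₂ | h₂
  · subst h₂
    rw [gaussianReal_zero_var, Measure.prod_dirac, Measure.map_map measurable_add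
      measurable_prodMk_right, add_zero]
    show Measure.map (fun a => a + m₂) (gaussianReal m₁ v₁) = _
    rw [gaussianReal_map_add_const m₂]
  · have h₁₂ : v₁ + v₂ ≠ 0 := by simp [h₁]
    ext s hs
    rw [Measure.map_apply measurable_add hs, Measure.prod_apply (measurable_add hs)]
    have step1 : ∀ a : ℝ, (gaussianReal m₂ v₂) (Prod.mk a ⁻¹' ((fun p : ℝ × ℝ => p.1 + p.2) ⁻¹' s))
        = ∫⁻ b in s, ENNReal.ofReal (gaussianPDFReal m₂ v₂ (b - a)) := by
      intro a
      have hpre : Prod.mk a ⁻¹' ((fun p : ℝ × ℝ => p.1 + p.2) ⁻¹' s) = (fun b => a + b) ⁻¹' s := rfl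
      rw [hpre, ← Measure.map_apply (measurable_const_add a) hs, gaussianReal_map_const_add,
        gaussianReal_apply _ h₂ s]
      congr 1
      ext b
      rw [gaussianPDF, gaussianPDFReal_sub]
    simp_rw [step1]
    rw [gaussianReal_of_var_ne_zero _ h₁,
      lintegral_withDensity_eq_lintegral_mul _ (measurable_gaussianPDF _ _)
        (by
          apply Measurable.lintegral_prod_right
          exact (ENNReal.measurable_ofReal.comp
            ((measurable_gaussianPDFReal m₂ v₂).comp (measurable_snd.sub measurable_fst))))]
    simp only [Pi.mul_apply]
    have step2 : ∀ a : ℝ, gaussianPDF m₁ v₁ a * ∫⁻ b in s, ENNReal.ofReal (gaussianPDFReal m₂ v₂ (b - a))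
        = ∫⁻ b in s, ENNReal.ofReal (gaussianPDFReal m₁ v₁ a * gaussianPDFReal m₂ v₂ (b - a)) := by
      intro a
      rw [← lintegral_const_mul' _ _ (by rw [gaussianPDF]; exact ENNReal.ofReal_ne_top)]
      congr 1
      ext b
      rw [gaussianPDF, ← ENNReal.ofReal_mul (gaussianPDFReal_nonneg _ _ _)]
    simp_rw [step2]
    rw [lintegral_lintegral_swap]
    · have step3 : ∀ b : ℝ, (∫⁻ a, ENNReal.ofReal
          (gaussianPDFReal m₁ v₁ a * gaussianPDFReal m₂ v₂ (b - a)) ∂volume)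
          = gaussianPDF (m₁ + m₂) (v₁ + v₂) b := by
        intro b
        rw [← ofReal_integral_eq_lintegral_ofReal]
        · rw [gauss_conv_pdf h₁ h₂]; rfl
        · refine Integrable.mono'
            ((integrable_gaussianPDFReal m₁ v₁).mul_const ((Real.sqrt (2*π*v₂))⁻¹)) ?_ ?_
          · exact (((measurable_gaussianPDFReal m₁ v₁).mul
              ((measurable_gaussianPDFReal m₂ v₂).comp
                (measurable_const.sub measurable_id)))).aestronglyMeasurable
          · refine ae_of_all _ fun a => ?_
            rw [Real.norm_eq_abs, abs_of_nonneg
              (mul_nonneg (gaussianPDFReal_nonneg _ _ _) (gaussianPDFReal_nonneg _ _ _))]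
            exact mul_le_mul_of_nonneg_left (gaussianPDFReal_le _ _ _)
              (gaussianPDFReal_nonneg _ _ _)
        · exact ae_of_all _ fun a =>
            mul_nonneg (gaussianPDFReal_nonneg _ _ _) (gaussianPDFReal_nonneg _ _ _)
      simp_rw [step3]
      rw [← gaussianReal_apply _ h₁₂ s]
    · exact (ENNReal.measurable_ofReal.comp
        (((measurable_gaussianPDFReal m₁ v₁).comp measurable_fst).mul
          ((measurable_gaussianPDFReal m₂ v₂).comp
            (measurable_snd.sub measurable_fst)))).aemeasurable
noncomputable def nnsq (a : ℝ) : ℝ≥0 := ⟨a^2, sq_nonneg _⟩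

lemma gauss_map_sum : ∀ (n : ℕ) (δ m : Fin n → ℝ) (v : Fin n → ℝ≥0),
    Measure.map (fun z : Fin n → ℝ => ∑ i, δ i * z i)
        (Measure.pi fun i => gaussianReal (m i) (v i))
      = gaussianReal (∑ i, δ i * m i) (∑ i, nnsq (δ i) * v i) := by
  intro n
  induction n with
  | zero =>
      intro δ m v
      have h0 : (fun z : Fin 0 → ℝ => ∑ i, δ i * z i) = fun _ => (0:ℝ) := by
        funext z; simp
      rw [h0, Measure.map_const, measure_univ, one_smul]
      simp
  | succ n ih =>
      intro δ m v
      have hmp := measurePreserving_piFinSuccAbove (fun i => gaussianReal (m i) (v i)) 0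
      set e := MeasurableEquiv.piFinSuccAbove (fun _ : Fin (n+1) => ℝ) 0 with he
      have hpi : (Measure.pi fun i => gaussianReal (m i) (v i))
          = Measure.map e.symm (((gaussianReal (m 0) (v 0))).prod
              (Measure.pi fun i : Fin n => gaussianReal (m ((0:Fin (n+1)).succAbove i))
                (v ((0:Fin (n+1)).succAbove i)))) := by
        rw [← hmp.map_eq, Measure.map_map e.symm.measurable e.measurable]
        simp
      have hTmeas : Measurable (fun z : Fin (n+1) → ℝ => ∑ i, δ i * z i) :=
        Finset.measurable_sum Finset.univ fun i _ => by fun_prop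
      rw [hpi, Measure.map_map hTmeas e.symm.measurable]
      have hcomp : (fun z : Fin (n+1) → ℝ => ∑ i, δ i * z i) ∘ e.symm
          = (fun p : ℝ × ℝ => p.1 + p.2) ∘
            (Prod.map (fun a : ℝ => δ 0 * a)
              (fun y : Fin n → ℝ => ∑ i : Fin n, δ (Fin.succ i) * y i)) := by
        funext p
        simp only [Function.comp_apply, Prod.map_apply]
        have hsym : e.symm p = Fin.cons p.1 p.2 := by
          rcases p with ⟨a, y⟩
          simp [he, MeasurableEquiv.piFinSuccAbove, Fin.insertNthEquiv, Fin.insertNth_zero]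
        rw [hsym, Fin.sum_univ_succ]
        simp
      rw [hcomp, ← Measure.map_map measurable_add
        ((measurable_const_mul _).prodMap
          (Finset.measurable_sum Finset.univ fun i _ => (measurable_pi_apply i).const_mul _)),
        ← Measure.map_prod_map _ _ (measurable_const_mul _)
          (Finset.measurable_sum Finset.univ fun i _ => (measurable_pi_apply i).const_mul _)]
      have h0s : ∀ i : Fin n, (0:Fin (n+1)).succAbove i = Fin.succ i := by
        intro i; simp [Fin.succAbove_zero]
      simp_rw [h0s]
      rw [show Measure.map (fun a : ℝ => δ 0 * a) (gaussianReal (m 0) (v 0))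
            = gaussianReal (δ 0 * m 0) (nnsq (δ 0) * v 0) from
          gaussianReal_map_const_mul (δ 0),
        ih (fun i => δ (Fin.succ i)) (fun i => m (Fin.succ i)) (fun i => v (Fin.succ i)),
        gauss_conv]
      rw [Fin.sum_univ_succ (f := fun i => δ i * m i),
        Fin.sum_univ_succ (f := fun i => nnsq (δ i) * v i)]
lemma gaussianReal_meas_ne_top (s : Set ℝ) : gaussianReal 0 1 s ≠ ⊤ :=
  (measure_lt_top _ s).ne

lemma gaussianReal_singleton (c : ℝ) : gaussianReal 0 1 {c} = 0 :=
  gaussianReal_absolutelyContinuous 0 one_ne_zero (volume_singleton)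

lemma gaussianReal_Ioc_pos {a b : ℝ} (h : a < b) : 0 < gaussianReal 0 1 (Set.Ioc a b) := by
  rw [gaussianReal_apply _ one_ne_zero]
  rw [lintegral_pos_iff_support (measurable_gaussianPDF 0 1)]
  have hsupp : Function.support (gaussianPDF 0 1) = Set.univ := by
    ext x
    simp only [Function.mem_support, Set.mem_univ, iff_true]
    exact (gaussianPDF_pos 0 one_ne_zero x).ne'
  rw [hsupp, Measure.restrict_apply_univ, Real.volume_Ioc]
  simp [h]

lemma Phi_sub {a b : ℝ} (h : a ≤ b) :
    Phi b - Phi a = (gaussianReal 0 1 (Set.Ioc a b)).toReal := by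
  have hu : Set.Iic a ∪ Set.Ioc a b = Set.Iic b := Set.Iic_union_Ioc_eq_Iic h
  have hd : Disjoint (Set.Iic a) (Set.Ioc a b) := Set.Iic_disjoint_Ioc le_rfl
  have := measure_union hd measurableSet_Ioc (μ := gaussianReal 0 1)
  rw [hu] at this
  rw [Phi, Phi, this, ENNReal.toReal_add (gaussianReal_meas_ne_top _) (gaussianReal_meas_ne_top _)]
  ring

lemma Phi_strictMono : StrictMono Phi := by
  intro a b h
  have := Phi_sub h.le
  have h2 := gaussianReal_Ioc_pos h
  have h3 : 0 < (gaussianReal 0 1 (Set.Ioc a b)).toReal :=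
    ENNReal.toReal_pos h2.ne' (gaussianReal_meas_ne_top _)
  linarith

lemma Phi_lipschitz_aux {a b : ℝ} (h : a ≤ b) :
    Phi b - Phi a ≤ (Real.sqrt (2*π))⁻¹ * (b - a) := by
  rw [Phi_sub h]
  have hC : (0:ℝ) ≤ (Real.sqrt (2*π))⁻¹ := by positivity
  have hle : gaussianReal 0 1 (Set.Ioc a b)
      ≤ ENNReal.ofReal ((Real.sqrt (2*π))⁻¹) * ENNReal.ofReal (b - a) := by
    rw [gaussianReal_apply _ one_ne_zero]
    calc ∫⁻ x in Set.Ioc a b, gaussianPDF 0 1 x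
        ≤ ∫⁻ _ in Set.Ioc a b, ENNReal.ofReal ((Real.sqrt (2*π))⁻¹) := by
          refine lintegral_mono fun x => ?_
          refine ENNReal.ofReal_le_ofReal ?_
          calc gaussianPDFReal 0 1 x ≤ (Real.sqrt (2*π*(1:ℝ≥0)))⁻¹ := by
                rw [gaussianPDFReal]
                have h1 : rexp (-(x - 0)^2 / (2*(1:ℝ≥0))) ≤ 1 := by
                  rw [Real.exp_le_one_iff]
                  have := sq_nonneg (x - 0)
                  rw [div_nonpos_iff]
                  right; constructor <;> [nlinarith; norm_num]
                have h2 : (0:ℝ) ≤ (Real.sqrt (2*π*(1:ℝ≥0)))⁻¹ := by positivity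
                calc (Real.sqrt (2*π*(1:ℝ≥0)))⁻¹ * rexp (-(x - 0)^2 / (2*(1:ℝ≥0)))
                    ≤ (Real.sqrt (2*π*(1:ℝ≥0)))⁻¹ * 1 := mul_le_mul_of_nonneg_left h1 h2
                  _ = _ := mul_one _
            _ = (Real.sqrt (2*π))⁻¹ := by norm_num
      _ = ENNReal.ofReal ((Real.sqrt (2*π))⁻¹) * ENNReal.ofReal (b - a) := by
          rw [setLIntegral_const, Real.volume_Ioc]
  calc (gaussianReal 0 1 (Set.Ioc a b)).toReal
      ≤ (ENNReal.ofReal ((Real.sqrt (2*π))⁻¹) * ENNReal.ofReal (b - a)).toReal := by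
        refine ENNReal.toReal_mono ?_ hle
        exact ENNReal.mul_ne_top ENNReal.ofReal_ne_top ENNReal.ofReal_ne_top
    _ = (Real.sqrt (2*π))⁻¹ * (b - a) := by
        rw [ENNReal.toReal_mul, ENNReal.toReal_ofReal hC, ENNReal.toReal_ofReal (by linarith)]

lemma Phi_continuous : Continuous Phi := by
  have hmono := Phi_strictMono.monotone
  refine (LipschitzWith.of_dist_le_mul (K := Real.toNNReal ((Real.sqrt (2*π))⁻¹))
    (f := Phi) fun a b => ?_).continuous
  rcases le_total a b with h | h
  · rw [Real.dist_eq, Real.dist_eq, abs_of_nonpos (by linarith [hmono h]), abs_of_nonpos (by linarith)]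
    have := Phi_lipschitz_aux h
    rw [Real.coe_toNNReal _ (by positivity)]
    nlinarith
  · rw [Real.dist_eq, Real.dist_eq, abs_of_nonneg (by linarith [hmono h]), abs_of_nonneg (by linarith)]
    have := Phi_lipschitz_aux h
    rw [Real.coe_toNNReal _ (by positivity)]
    nlinarith

lemma Phi_tendsto_atTop : Filter.Tendsto Phi Filter.atTop (nhds 1) := by
  have h := tendsto_measure_Iic_atTop (μ := gaussianReal 0 1)
  rw [measure_univ] at h
  have := (ENNReal.tendsto_toReal (by norm_num : (1:ℝ≥0∞) ≠ ⊤)).comp h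
  exact this

lemma Phi_tendsto_atBot : Filter.Tendsto Phi Filter.atBot (nhds 0) := by
  have key : ∀ t : ℝ, Phi t = 1 - (gaussianReal 0 1 (Set.Ici t)).toReal := by
    intro t
    have hu : Set.Iic t ∪ Set.Ioi t = Set.univ := Set.Iic_union_Ioi
    have hd : Disjoint (Set.Iic t) (Set.Ioi t) := Set.Iic_disjoint_Ioi le_rfl
    have hun := measure_union hd measurableSet_Ioi (μ := gaussianReal 0 1)
    rw [hu, measure_univ] at hun
    have hIci : gaussianReal 0 1 (Set.Ici t) = gaussianReal 0 1 (Set.Ioi t) := by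
      have : Set.Ici t = {t} ∪ Set.Ioi t := by
        ext y; simp [Set.mem_Ici, le_iff_lt_or_eq, or_comm, eq_comm]
      rw [this, measure_union (by simp [Set.disjoint_left]) measurableSet_Ioi,
        gaussianReal_singleton, zero_add]
    rw [Phi, hIci]
    have h1 := gaussianReal_meas_ne_top (Set.Iic t)
    have h2 := gaussianReal_meas_ne_top (Set.Ioi t)
    have := ENNReal.toReal_add h1 h2
    rw [← hun, ENNReal.toReal_one] at this
    linarith
  rw [show Phi = fun t => 1 - (gaussianReal 0 1 (Set.Ici t)).toReal from funext key]
  have h := tendsto_measure_Ici_atBot (μ := gaussianReal 0 1)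
  rw [measure_univ] at h
  have h2 := (ENNReal.tendsto_toReal (by norm_num : (1:ℝ≥0∞) ≠ ⊤)).comp h
  have h3 : Filter.Tendsto (fun t => 1 - ((gaussianReal 0 1 (Set.Ici t)).toReal)) Filter.atBot
      (nhds (1 - 1)) := Filter.Tendsto.sub tendsto_const_nhds h2
  simpa using h3

lemma Phi_surj {p : ℝ} (hp : p ∈ Set.Ioo (0:ℝ) 1) : ∃ t, Phi t = p := by
  obtain ⟨a, ha⟩ := (Phi_tendsto_atBot.eventually_lt_const hp.1).exists
  obtain ⟨b, hb⟩ := (Phi_tendsto_atTop.eventually_const_lt hp.2).exists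
  have hab : a ≤ b := by
    by_contra hba
    push_neg at hba
    have := Phi_strictMono hba
    linarith
  obtain ⟨t, _, ht⟩ := intermediate_value_Icc hab Phi_continuous.continuousOn
    (Set.mem_Icc.mpr ⟨ha.le, hb.le⟩)
  exact ⟨t, ht⟩

lemma Phi_PhiInv {p : ℝ} (hp : p ∈ Set.Ioo (0:ℝ) 1) : Phi (PhiInv p) = p :=
  Function.invFun_eq (Phi_surj hp)

lemma PhiInv_Phi (t : ℝ) : PhiInv (Phi t) = t :=
  Function.leftInverse_invFun Phi_strictMono.injective t

lemma Phi_neg (t : ℝ) : Phi (-t) = 1 - Phi t := by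
  have hmap : (gaussianReal 0 1).map (fun x => (-1 : ℝ) * x) = gaussianReal 0 1 := by
    have hv : (⟨(-1:ℝ)^2, sq_nonneg _⟩ : ℝ≥0) * 1 = 1 := by ext; norm_num
    rw [gaussianReal_map_const_mul]
    congr 1
    · norm_num
  have : gaussianReal 0 1 (Set.Iic (-t)) = gaussianReal 0 1 (Set.Ici t) := by
    conv_lhs => rw [← hmap]
    rw [Measure.map_apply (measurable_const_mul _) measurableSet_Iic]
    congr 1
    ext y
    simp only [Set.mem_preimage, Set.mem_Iic, Set.mem_Ici]
    constructor <;> intro h <;> nlinarith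
  rw [Phi, this]
  have hu : Set.Iic t ∪ Set.Ioi t = Set.univ := Set.Iic_union_Ioi
  have hd : Disjoint (Set.Iic t) (Set.Ioi t) := Set.Iic_disjoint_Ioi le_rfl
  have hun := measure_union hd measurableSet_Ioi (μ := gaussianReal 0 1)
  rw [hu, measure_univ] at hun
  have hIci : gaussianReal 0 1 (Set.Ici t) = gaussianReal 0 1 (Set.Ioi t) := by
    have : Set.Ici t = {t} ∪ Set.Ioi t := by
      ext y; simp [Set.mem_Ici, le_iff_lt_or_eq, or_comm, eq_comm]
    rw [this, measure_union (by simp [Set.disjoint_left]) measurableSet_Ioi,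
      gaussianReal_singleton, zero_add]
  rw [hIci]
  have := ENNReal.toReal_add (gaussianReal_meas_ne_top (Set.Iic t))
    (gaussianReal_meas_ne_top (Set.Ioi t))
  rw [← hun, ENNReal.toReal_one] at this
  rw [Phi]
  linarith

lemma Phi_zero : Phi 0 = 1/2 := by
  have := Phi_neg 0
  rw [neg_zero] at this
  linarith
lemma gaussianReal_Iic_toReal {v : ℝ≥0} (hv : v ≠ 0) (m β : ℝ) :
    ((gaussianReal m v) (Set.Iic β)).toReal = Phi ((β - m) / Real.sqrt v) := by
  have hvpos : (0:ℝ) < (v:ℝ) := NNReal.coe_pos.mpr (pos_iff_ne_zero.mpr hv)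
  have hs : (0:ℝ) < Real.sqrt v := Real.sqrt_pos.mpr hvpos
  have h1 : Measure.map (fun x : ℝ => Real.sqrt (v:ℝ) * x) (gaussianReal 0 1)
      = gaussianReal 0 v := by
    rw [gaussianReal_map_const_mul]
    congr 1
    · ring
    · ext
      simp only [NNReal.coe_mul, NNReal.coe_mk, NNReal.coe_one, mul_one]
      exact Real.sq_sqrt hvpos.le
  have h2 : Measure.map (fun x : ℝ => Real.sqrt (v:ℝ) * x + m) (gaussianReal 0 1)
      = gaussianReal m v := by
    have : (fun x : ℝ => Real.sqrt (v:ℝ) * x + m)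
        = (fun x : ℝ => x + m) ∘ (fun x : ℝ => Real.sqrt (v:ℝ) * x) := rfl
    rw [this, ← Measure.map_map (measurable_add_const m) (measurable_const_mul _), h1,
      gaussianReal_map_add_const, zero_add]
  rw [← h2, Measure.map_apply ((measurable_const_mul _).add_const m) measurableSet_Iic]
  have hpre : (fun x : ℝ => Real.sqrt (v:ℝ) * x + m) ⁻¹' Set.Iic β
      = Set.Iic ((β - m) / Real.sqrt (v:ℝ)) := by
    ext y
    simp only [Set.mem_preimage, Set.mem_Iic]
    rw [le_div_iff₀ hs]
    constructor <;> intro h <;> nlinarith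
  rw [hpre]
  rfl

lemma gauss_shift_density {v : ℝ≥0} (hv : v ≠ 0) (m c : ℝ) :
    gaussianReal (m + c) v = (gaussianReal m v).withDensity
      (fun z => ENNReal.ofReal (rexp (c*(z - m)/v - c^2/(2*v)))) := by
  have hvpos : (0:ℝ) < (v:ℝ) := NNReal.coe_pos.mpr (pos_iff_ne_zero.mpr hv)
  rw [gaussianReal_of_var_ne_zero _ hv, gaussianReal_of_var_ne_zero _ hv,
    ← withDensity_mul (g := fun z => ENNReal.ofReal (rexp (c*(z - m)/v - c^2/(2*v)))) _
      (measurable_gaussianPDF m v) (by fun_prop)]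
  congr 1
  funext z
  rw [Pi.mul_apply, gaussianPDF, gaussianPDF,
    ← ENNReal.ofReal_mul (gaussianPDFReal_nonneg _ _ _)]
  congr 1
  rw [gaussianPDFReal, gaussianPDFReal]
  rw [mul_assoc ((Real.sqrt (2*π*(v:ℝ)))⁻¹), ← Real.exp_add]
  congr 1
  field_simp
  ring

lemma lintegral_pi_prod : ∀ (n : ℕ) (μ : Fin n → Measure ℝ),
    (∀ i, IsProbabilityMeasure (μ i)) → ∀ (f : Fin n → ℝ → ℝ≥0∞), (∀ i, Measurable (f i)) →
    ∫⁻ z, ∏ i, f i (z i) ∂Measure.pi μ = ∏ i, ∫⁻ x, f i x ∂μ i := by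
  intro n
  induction n with
  | zero =>
      intro μ hμ f hf
      have : ∀ z : Fin 0 → ℝ, ∏ i, f i (z i) = 1 := by intro z; simp
      simp_rw [this]
      haveI := fun i => hμ i
      rw [lintegral_one, measure_univ]
      simp
  | succ n ih =>
      intro μ hμ f hf
      haveI := fun i => hμ i
      have hmp := measurePreserving_piFinSuccAbove μ 0
      set e := MeasurableEquiv.piFinSuccAbove (fun _ : Fin (n+1) => ℝ) 0 with he
      have hmeas : Measurable (fun p : ℝ × (Fin n → ℝ) =>
          f 0 p.1 * ∏ i : Fin n, f ((0:Fin (n+1)).succAbove i) (p.2 i)) := by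
        refine ((hf 0).comp measurable_fst).mul ?_
        exact Finset.measurable_prod Finset.univ fun i _ =>
          (hf _).comp ((measurable_pi_apply i).comp measurable_snd)
      have key : ∫⁻ z, ∏ i, f i (z i) ∂Measure.pi μ
          = ∫⁻ p, f 0 p.1 * ∏ i : Fin n, f ((0:Fin (n+1)).succAbove i) (p.2 i)
              ∂((μ 0).prod (Measure.pi fun i => μ ((0:Fin (n+1)).succAbove i))) := by
        rw [← hmp.map_eq, lintegral_map hmeas e.measurable]
        congr 1
        funext z
        have h0 : (e z).1 = z 0 := rfl
        have h1 : ∀ i : Fin n, (e z).2 i = z ((0:Fin (n+1)).succAbove i) := fun i => rfl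
        simp_rw [h0, h1]
        rw [Fin.prod_univ_succ]
        congr 1
      have hg : Measurable (fun y : Fin n → ℝ =>
          ∏ i : Fin n, f ((0:Fin (n+1)).succAbove i) (y i)) :=
        Finset.measurable_prod Finset.univ fun i _ => (hf _).comp (measurable_pi_apply i)
      rw [key, lintegral_prod_mul (hf 0).aemeasurable hg.aemeasurable,
        ih _ (fun i => inferInstance) _ (fun i => hf _), Fin.prod_univ_succ]
      congr 1

lemma pi_withDensity' {n : ℕ} (μ ν : Fin n → Measure ℝ)
    [∀ i, IsProbabilityMeasure (μ i)] [∀ i, IsProbabilityMeasure (ν i)]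
    (f : Fin n → ℝ → ℝ≥0∞) (hf : ∀ i, Measurable (f i))
    (h : ∀ i, ν i = (μ i).withDensity (f i)) :
    Measure.pi ν = (Measure.pi μ).withDensity (fun z => ∏ i, f i (z i)) := by
  refine Measure.pi_eq (μ := ν) fun s hs => ?_
  rw [withDensity_apply _ (MeasurableSet.univ_pi hs)]
  have hind : ∀ z : Fin n → ℝ, (Set.univ.pi s).indicator (fun z => ∏ i, f i (z i)) z
      = ∏ i, (s i).indicator (f i) (z i) := by
    intro z
    by_cases hz : z ∈ Set.univ.pi s
    · rw [Set.indicator_of_mem hz]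
      refine Finset.prod_congr rfl fun i _ => ?_
      rw [Set.indicator_of_mem (hz i (Set.mem_univ i))]
    · rw [Set.indicator_of_notMem hz]
      have hz' : ¬ ∀ i, z i ∈ s i := by simpa [Set.mem_pi] using hz
      push_neg at hz'
      obtain ⟨i, hi⟩ := hz'
      refine (Finset.prod_eq_zero (Finset.mem_univ i) ?_).symm
      rw [Set.indicator_of_notMem hi]
  rw [← lintegral_indicator (MeasurableSet.univ_pi hs)]
  simp_rw [hind]
  rw [lintegral_pi_prod _ _ (fun i => inferInstance) _
    (fun i => (hf i).indicator (hs i))]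
  refine Finset.prod_congr rfl fun i _ => ?_
  rw [lintegral_indicator (hs i), ← withDensity_apply _ (hs i), ← h i]

/-- Binary-classification randomized smoothing certificate (Appendix C.2): if
`p = μ_x(f̃⁻¹{1}) ∈ (1/2, 1)`, then for every `δ` with `‖δ‖₂ < (σ/2)(Φ⁻¹(p) - Φ⁻¹(1-p))`,
`μ_{x+δ}(f̃⁻¹{1}) > 1/2`; in particular the smoothed binary classifier outputs `1` at `x + δ`. -/
theorem binary_smoothing_certificate
    {d : ℕ} {σ : ℝ} (hσ : 0 < σ)
    (f : EuclideanSpace ℝ (Fin d) → Fin 2) (hf : Measurable f)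
    (x : EuclideanSpace ℝ (Fin d)) (p : ℝ)
    (hpdef : p = (gaussPi d σ x (f ⁻¹' {1})).toReal)
    (hp : p ∈ Set.Ioo (1 / 2 : ℝ) 1) :
    ∀ δ : EuclideanSpace ℝ (Fin d),
      ‖δ‖ < σ / 2 * (PhiInv p - PhiInv (1 - p)) →
      1 / 2 < (gaussPi d σ (x + δ) (f ⁻¹' {1})).toReal ∧
      (fun y : EuclideanSpace ℝ (Fin d) =>
          if 1 / 2 < (gaussPi d σ y (f ⁻¹' {1})).toReal then (1 : Fin 2) else 0) (x + δ) = 1 := by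
  intro δ hδ
  set V : ℝ≥0 := ⟨σ ^ 2, sq_nonneg σ⟩ with hVdef
  have hVcoe : (V : ℝ) = σ ^ 2 := rfl
  have hV : V ≠ 0 := by
    intro h
    have h2 : (V : ℝ) = 0 := by rw [h]; rfl
    rw [hVcoe] at h2
    nlinarith
  set A : Set (EuclideanSpace ℝ (Fin d)) := f ⁻¹' {1} with hAdef
  have hA : MeasurableSet A := hf (measurableSet_singleton 1)
  have hprob : ∀ y : EuclideanSpace ℝ (Fin d), IsProbabilityMeasure (gaussPi d σ y) :=
    fun y => by
      unfold gaussPi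
      haveI : IsProbabilityMeasure (Measure.pi fun i : Fin d => gaussianReal (y i) V) :=
        inferInstance
      exact Measure.isProbabilityMeasure_map (MeasurableEquiv.toLp 2 (Fin d → ℝ)).measurable.aemeasurable
  have hne : ∀ (y : EuclideanSpace ℝ (Fin d)) (s : Set (EuclideanSpace ℝ (Fin d))),
      gaussPi d σ y s ≠ ⊤ := fun y s => by
    haveI := hprob y; exact (measure_lt_top _ _).ne
  suffices h1 : 1 / 2 < (gaussPi d σ (x + δ) A).toReal by
    refine ⟨h1, ?_⟩
    show (if 1 / 2 < (gaussPi d σ (x + δ) A).toReal then (1 : Fin 2) else 0) = 1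
    rw [if_pos h1]
  rcases eq_or_ne δ 0 with rfl | hδ0
  · rw [add_zero, ← hpdef]
    exact hp.1
  have hnδ : 0 < ‖δ‖ := norm_pos_iff.mpr hδ0
  have hp01 : p ∈ Set.Ioo (0:ℝ) 1 := ⟨by linarith [hp.1], hp.2⟩
  set t : ℝ := PhiInv p with htdef
  have ht : Phi t = p := Phi_PhiInv hp01
  have htpos : 0 < t := by
    have h0 : Phi 0 < Phi t := by rw [ht, Phi_zero]; exact hp.1
    exact Phi_strictMono.lt_iff_lt.mp h0
  have hPhiInv_neg : PhiInv (1 - p) = -t := by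
    have hneg : Phi (-t) = 1 - p := by rw [Phi_neg, ht]
    rw [← hneg, PhiInv_Phi]
  have hδt : ‖δ‖ < σ * t := by
    rw [hPhiInv_neg] at hδ
    have : σ / 2 * (t - -t) = σ * t := by ring
    linarith
  have hsum : ∑ i, δ i ^ 2 = ‖δ‖ ^ 2 := by
    rw [EuclideanSpace.norm_eq,
      Real.sq_sqrt (Finset.sum_nonneg fun i _ => sq_nonneg _)]
    exact Finset.sum_congr rfl fun i _ => by rw [Real.norm_eq_abs, sq_abs]
  set M₀ : ℝ := ∑ i, δ i * x i with hM₀def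
  set S : EuclideanSpace ℝ (Fin d) → ℝ := fun z => ∑ i, δ i * z i with hSdef
  have hSmeas : Measurable S :=
    Finset.measurable_sum Finset.univ fun i _ =>
      ((measurable_pi_apply i).comp (WithLp.measurable_ofLp 2 (Fin d → ℝ)) :
        Measurable fun z : EuclideanSpace ℝ (Fin d) => z i).const_mul (δ i)
  set vS : ℝ≥0 := ∑ i, nnsq (δ i) * V with hvSdef
  have hvS : (vS : ℝ) = ‖δ‖ ^ 2 * σ ^ 2 := by
    have h1 : (vS : ℝ) = ∑ i, (δ i) ^ 2 * σ ^ 2 := by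
      rw [hvSdef, NNReal.coe_sum]
      exact Finset.sum_congr rfl fun i _ => by rw [NNReal.coe_mul, hVcoe]; rfl
    rw [h1, ← Finset.sum_mul, hsum]
  have hvS_ne : vS ≠ 0 := by
    intro h
    have h2 : (vS : ℝ) = 0 := by rw [h]; rfl
    rw [hvS] at h2
    nlinarith [mul_pos (pow_pos hnδ 2) (pow_pos hσ 2)]
  have hsqrtvS : Real.sqrt vS = ‖δ‖ * σ := by
    rw [hvS, show ‖δ‖ ^ 2 * σ ^ 2 = (‖δ‖ * σ) ^ 2 from by ring,
      Real.sqrt_sq (by positivity)]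
  set β : ℝ := M₀ + σ * ‖δ‖ * t with hβdef
  set H : Set (EuclideanSpace ℝ (Fin d)) := S ⁻¹' Set.Iic β with hHdef
  have hH : MeasurableSet H := hSmeas measurableSet_Iic
  have hlaw : ∀ y : EuclideanSpace ℝ (Fin d),
      Measure.map S (gaussPi d σ y) = gaussianReal (∑ i, δ i * y i) vS :=
    fun y => by
      rw [gaussPi, Measure.map_map hSmeas (MeasurableEquiv.toLp 2 (Fin d → ℝ)).measurable]
      exact gauss_map_sum d (fun i => δ i) (fun i => y i) (fun _ => V)
  have hμH : ∀ y : EuclideanSpace ℝ (Fin d),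
      gaussPi d σ y H = gaussianReal (∑ i, δ i * y i) vS (Set.Iic β) := by
    intro y
    rw [← hlaw y, Measure.map_apply hSmeas measurableSet_Iic]
  have hμxH_val : (gaussPi d σ x H).toReal = p := by
    rw [hμH x, gaussianReal_Iic_toReal hvS_ne, hsqrtvS, ← hM₀def]
    have harg : (β - M₀) / (‖δ‖ * σ) = t := by
      rw [hβdef]
      field_simp
      ring
    rw [harg, ht]
  have hμxH : gaussPi d σ x H = ENNReal.ofReal p := by
    rw [← hμxH_val, ENNReal.ofReal_toReal (hne x H)]
  have hμxA : gaussPi d σ x A = ENNReal.ofReal p := by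
    rw [hpdef, ENNReal.ofReal_toReal (hne x A)]
  -- density of the shifted measure
  set ℓ : ℝ → ℝ≥0∞ := fun r =>
    ENNReal.ofReal (Real.exp ((r - M₀) / σ ^ 2 - ‖δ‖ ^ 2 / (2 * σ ^ 2))) with hℓdef
  have hcoord : ∀ i, gaussianReal ((x + δ) i) V = (gaussianReal (x i) V).withDensity
      (fun z => ENNReal.ofReal (Real.exp (δ i * (z - x i) / (V:ℝ) - (δ i) ^ 2 / (2 * (V:ℝ))))) := by
    intro i
    have hxd : (x + δ) i = x i + δ i := rfl
    rw [hxd]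
    exact gauss_shift_density hV (x i) (δ i)
  have hdens : gaussPi d σ (x + δ) = (gaussPi d σ x).withDensity
      (fun z => ∏ i, ENNReal.ofReal
        (Real.exp (δ i * (z i - x i) / (V:ℝ) - (δ i) ^ 2 / (2 * (V:ℝ))))) := by
    have hpw := pi_withDensity' (fun i => gaussianReal (x i) V) (fun i => gaussianReal ((x + δ) i) V)
      (fun i z => ENNReal.ofReal (Real.exp (δ i * (z - x i) / (V:ℝ) - (δ i) ^ 2 / (2 * (V:ℝ)))))
      (fun i => by fun_prop) hcoord
    ext s hs
    rw [gaussPi, gaussPi, Measure.map_apply (MeasurableEquiv.toLp 2 (Fin d → ℝ)).measurable hs, hpw,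
      withDensity_apply _ ((MeasurableEquiv.toLp 2 (Fin d → ℝ)).measurable hs), withDensity_apply _ hs,
      setLIntegral_map hs (by fun_prop) (MeasurableEquiv.toLp 2 (Fin d → ℝ)).measurable]
    rfl
  have hprodpt : ∀ z : EuclideanSpace ℝ (Fin d),
      (∏ i, ENNReal.ofReal
        (Real.exp (δ i * (z i - x i) / (V:ℝ) - (δ i) ^ 2 / (2 * (V:ℝ))))) = ℓ (S z) := by
    intro z
    rw [← ENNReal.ofReal_prod_of_nonneg (fun i _ => (Real.exp_pos _).le), ← Real.exp_sum]
    congr 1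
    have hterm : ∀ i : Fin d, δ i * (z i - x i) / (V:ℝ) - (δ i) ^ 2 / (2 * (V:ℝ))
        = δ i * z i / σ ^ 2 - δ i * x i / σ ^ 2 - (δ i) ^ 2 / (2 * σ ^ 2) := by
      intro i
      rw [hVcoe]
      have hσ2 : σ ^ 2 ≠ 0 := by positivity
      field_simp
    rw [Finset.sum_congr rfl fun i _ => hterm i]
    rw [Finset.sum_sub_distrib, Finset.sum_sub_distrib, ← Finset.sum_div, ← Finset.sum_div,
      ← Finset.sum_div, hsum]
    rw [hSdef, hM₀def]
    ring
  have hdens' : gaussPi d σ (x + δ) = (gaussPi d σ x).withDensity (fun z => ℓ (S z)) := by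
    rw [hdens]
    congr 1
    funext z
    exact hprodpt z
  set c₀ : ℝ≥0∞ := ℓ β with hc₀def
  have hℓmono : Monotone ℓ := by
    intro a b hab
    refine ENNReal.ofReal_le_ofReal (Real.exp_le_exp.mpr ?_)
    have hσ2 : (0:ℝ) < σ ^ 2 := by positivity
    gcongr
  have hℓS : Measurable fun z => ℓ (S z) := by
    refine ENNReal.measurable_ofReal.comp (Real.measurable_exp.comp ?_)
    exact ((hSmeas.sub measurable_const).div_const _).sub measurable_const
  have hpt : ∀ z, H.indicator (fun z => ℓ (S z)) z + A.indicator (fun _ => c₀) z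
      ≤ A.indicator (fun z => ℓ (S z)) z + H.indicator (fun _ => c₀) z := by
    intro z
    by_cases hzH : z ∈ H <;> by_cases hzA : z ∈ A
    · rw [Set.indicator_of_mem hzH (fun z => ℓ (S z)), Set.indicator_of_mem hzA (fun _ => c₀),
        Set.indicator_of_mem hzA (fun z => ℓ (S z)), Set.indicator_of_mem hzH (fun _ => c₀)]
    · rw [Set.indicator_of_mem hzH (fun z => ℓ (S z)),
        Set.indicator_of_notMem hzA (fun _ => c₀),
        Set.indicator_of_notMem hzA (fun z => ℓ (S z)),
        Set.indicator_of_mem hzH (fun _ => c₀), add_zero, zero_add]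
      exact hℓmono hzH
    · rw [Set.indicator_of_notMem hzH (fun z => ℓ (S z)),
        Set.indicator_of_mem hzA (fun _ => c₀),
        Set.indicator_of_mem hzA (fun z => ℓ (S z)),
        Set.indicator_of_notMem hzH (fun _ => c₀), add_zero, zero_add]
      exact hℓmono (le_of_not_ge hzH)
    · rw [Set.indicator_of_notMem hzH (fun z => ℓ (S z)),
        Set.indicator_of_notMem hzA (fun _ => c₀),
        Set.indicator_of_notMem hzA (fun z => ℓ (S z)),
        Set.indicator_of_notMem hzH (fun _ => c₀)]
  have hint := lintegral_mono hpt (μ := gaussPi d σ x)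
  have e1 : ∫⁻ z, H.indicator (fun z => ℓ (S z)) z ∂gaussPi d σ x
      = gaussPi d σ (x + δ) H := by
    rw [lintegral_indicator hH, hdens', withDensity_apply _ hH]
  have e2 : ∫⁻ z, A.indicator (fun z => ℓ (S z)) z ∂gaussPi d σ x
      = gaussPi d σ (x + δ) A := by
    rw [lintegral_indicator hA, hdens', withDensity_apply _ hA]
  have e3 : ∫⁻ z, A.indicator (fun _ => c₀) z ∂gaussPi d σ x = c₀ * ENNReal.ofReal p := by
    rw [lintegral_indicator_const hA, hμxA]
  have e4 : ∫⁻ z, H.indicator (fun _ => c₀) z ∂gaussPi d σ x = c₀ * ENNReal.ofReal p := by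
    rw [lintegral_indicator_const hH, hμxH]
  have hleft : ∫⁻ z, (H.indicator (fun z => ℓ (S z)) z + A.indicator (fun _ => c₀) z)
      ∂gaussPi d σ x = gaussPi d σ (x + δ) H + c₀ * ENNReal.ofReal p := by
    rw [lintegral_add_left (hℓS.indicator hH), e1, e3]
  have hright : ∫⁻ z, (A.indicator (fun z => ℓ (S z)) z + H.indicator (fun _ => c₀) z)
      ∂gaussPi d σ x = gaussPi d σ (x + δ) A + c₀ * ENNReal.ofReal p := by
    rw [lintegral_add_left (hℓS.indicator hA), e2, e4]
  rw [hleft, hright] at hint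
  have hNP : gaussPi d σ (x + δ) H ≤ gaussPi d σ (x + δ) A :=
    (ENNReal.add_le_add_iff_right
      (ENNReal.mul_ne_top ENNReal.ofReal_ne_top ENNReal.ofReal_ne_top)).mp hint
  have hνH_val : (gaussPi d σ (x + δ) H).toReal = Phi (t - ‖δ‖ / σ) := by
    rw [hμH (x + δ), gaussianReal_Iic_toReal hvS_ne, hsqrtvS]
    congr 1
    have hxd : ∀ i : Fin d, (x + δ) i = x i + δ i := fun i => rfl
    have hsum2 : ∑ i, δ i * (x + δ) i = M₀ + ‖δ‖ ^ 2 := by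
      rw [Finset.sum_congr rfl fun i _ => by rw [hxd i, mul_add]]
      rw [Finset.sum_add_distrib, hM₀def]
      congr 1
      rw [← hsum]
      exact Finset.sum_congr rfl fun i _ => by ring
    rw [hsum2, hβdef]
    field_simp
    ring
  have hhalf : 1 / 2 < Phi (t - ‖δ‖ / σ) := by
    rw [← Phi_zero]
    refine Phi_strictMono ?_
    rw [sub_pos]
    rw [div_lt_iff₀ hσ]
    linarith
  have hfin : (gaussPi d σ (x + δ) H).toReal ≤ (gaussPi d σ (x + δ) A).toReal :=
    ENNReal.toReal_mono (hne (x + δ) A) hNP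
  rw [hνH_val] at hfin
  linarith
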